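/- Let p ≥ 3 be a prime, let q, k ≥ 1 be natural numbers and θ ∈ ℚ_p with |θ − 1|_p < |q|_p < |k|_p. If ξ, ξ′ ∈ ℚ_p are two distinct k-th roots of unity (ξ^k = ξ′^k = 1, ξ ≠ ξ′), then |x_ξ − x_{ξ′}|_p ≥ |q·(θ − 1)|_p; in particular the open balls B_r(x_ξ) and B_r(x_{ξ′}) with r = |q·(θ − 1)|_p are disjoint. -/

import Mathlib

open scoped Classical

/-- The center `x_ξ` associated with a `k`-th root of unity `ξ`. -/
noncomputable def xiCenter (p : ℕ) [Fact p.Prime] (q k : ℕ) (θ ξ : ℚ_[p]) : ℚ_[p] :=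
  if ξ = 1 then
    1 - (q : ℚ_[p]) + ((k : ℚ_[p]) - 1) *
      (1 - (q : ℚ_[p]) / 2 + ((k : ℚ_[p]) - 2) * (q : ℚ_[p]) ^ 2 / (6 * (k : ℚ_[p]))) * (θ - 1)
  else
    2 - (q : ℚ_[p]) - θ + (q : ℚ_[p]) * (θ - 1) / (1 - ξ)

section Aux

variable {p : ℕ} [hp : Fact p.Prime]

private lemma padic_p_mul_le {x y : ℚ_[p]} (hx : x ≠ 0) (h : ‖x‖ < ‖y‖) :
    (p : ℝ) * ‖x‖ ≤ ‖y‖ := by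
  have hy : y ≠ 0 := by
    rintro rfl
    simp only [norm_zero] at h
    exact absurd h (norm_nonneg x).not_gt
  have hp1 : (1 : ℝ) < p := by exact_mod_cast hp.out.one_lt
  rw [Padic.norm_eq_zpow_neg_valuation hx, Padic.norm_eq_zpow_neg_valuation hy] at h ⊢
  have hv : -x.valuation < -y.valuation := (zpow_lt_zpow_iff_right₀ hp1).mp h
  calc (p : ℝ) * (p : ℝ) ^ (-x.valuation)
        = (p : ℝ) ^ (-x.valuation + 1) := by
        rw [zpow_add_one₀ (by positivity)]; ring
    _ ≤ (p : ℝ) ^ (-y.valuation) := zpow_le_zpow_right₀ hp1.le (by omega)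

private lemma padic_norm_le_inv {x : ℚ_[p]} (h : ‖x‖ < 1) : ‖x‖ ≤ (p : ℝ)⁻¹ := by
  have hp0 : (0 : ℝ) < p := by exact_mod_cast hp.out.pos
  rcases eq_or_ne x 0 with rfl | hx
  · simp
  have h1 : ‖x‖ < ‖(1 : ℚ_[p])‖ := by simpa using h
  have := padic_p_mul_le hx h1
  rw [norm_one] at this
  rw [inv_eq_one_div, le_div_iff₀ hp0]
  linarith [this, mul_comm (p : ℝ) ‖x‖]

private lemma norm_eq_one_of_pow {k : ℕ} (hk : k ≠ 0) {ζ : ℚ_[p]} (h : ζ ^ k = 1) :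
    ‖ζ‖ = 1 := by
  have h1 : ‖ζ‖ ^ k = 1 := by rw [← norm_pow, h, norm_one]
  by_contra hne
  rcases lt_or_gt_of_ne hne with hlt | hgt
  · have := pow_lt_one₀ (norm_nonneg ζ) hlt hk
    rw [h1] at this; exact lt_irrefl 1 this
  · have := one_lt_pow₀ hgt hk
    rw [h1] at this; exact lt_irrefl 1 this

private lemma norm_pow_sub_one_le {ζ : ℚ_[p]} (hζ : ‖ζ‖ = 1) (i : ℕ) :
    ‖ζ ^ i - 1‖ ≤ ‖ζ - 1‖ := by
  have hid : ζ ^ i - 1 = (∑ j ∈ Finset.range i, ζ ^ j) * (ζ - 1) := (geom_sum_mul ζ i).symm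
  rw [hid, norm_mul]
  have hS : ‖∑ j ∈ Finset.range i, ζ ^ j‖ ≤ 1 :=
    IsUltrametricDist.norm_sum_le_of_forall_le_of_nonneg zero_le_one
      (fun j _ => by rw [norm_pow, hζ, one_pow])
  exact mul_le_of_le_one_left (norm_nonneg _) hS

private lemma pth_root_eq_one (hp3 : 3 ≤ p) {η : ℚ_[p]} (hη : η ^ p = 1)
    (hlt : ‖η - 1‖ < 1) : η = 1 := by
  by_contra hne
  have hp0 : (0 : ℝ) < p := by exact_mod_cast hp.out.pos
  set t := η - 1 with ht
  have ht0 : t ≠ 0 := sub_ne_zero.mpr hne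
  have htp : ‖t‖ ≤ (p : ℝ)⁻¹ := padic_norm_le_inv hlt
  have ht1 : ‖t‖ ≤ 1 := hlt.le
  have htpos : 0 < ‖t‖ := norm_pos_iff.mpr ht0
  have hη' : (t + 1) ^ p = 1 := by
    rw [ht, sub_add_cancel]; exact hη
  have hexp : (∑ i ∈ Finset.range (p + 1), t ^ i * ((p.choose i : ℕ) : ℚ_[p])) = 1 := by
    have h := add_pow t 1 p
    simp only [one_pow, mul_one] at h
    rw [← h, hη']
  obtain ⟨m, hm⟩ : ∃ m, p + 1 = m + 3 := ⟨p - 2, by omega⟩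
  rw [hm, Finset.sum_range_succ', Finset.sum_range_succ'] at hexp
  simp only [pow_zero, Nat.choose_zero_right, Nat.cast_one, one_mul, zero_add,
    Nat.choose_one_right, pow_one] at hexp
  have hkey : (p : ℚ_[p]) * t =
      -(∑ i ∈ Finset.range (m + 1), t ^ (i + 1 + 1) * ((p.choose (i + 1 + 1) : ℕ) : ℚ_[p])) := by
    linear_combination hexp
  have hbound : ‖∑ i ∈ Finset.range (m + 1),
      t ^ (i + 1 + 1) * ((p.choose (i + 1 + 1) : ℕ) : ℚ_[p])‖
      ≤ ‖t‖ * ((p : ℝ)⁻¹ * (p : ℝ)⁻¹) := by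
    apply IsUltrametricDist.norm_sum_le_of_forall_le_of_nonneg (by positivity)
    intro i hi
    rw [Finset.mem_range] at hi
    have hi2 : i + 2 ≤ p := by omega
    rw [norm_mul, norm_pow]
    rcases lt_or_eq_of_le hi2 with hcase | hcase
    · -- middle binomial: p divides it
      have hdvd : (p : ℤ) ^ 1 ∣ ((p.choose (i + 1 + 1) : ℕ) : ℤ) := by
        rw [pow_one]
        exact_mod_cast hp.out.dvd_choose_self (by omega) (by omega)
      have hC : ‖((p.choose (i + 1 + 1) : ℕ) : ℚ_[p])‖ ≤ (p : ℝ)⁻¹ := by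
        have := (Padic.norm_int_le_pow_iff_dvd ((p.choose (i + 1 + 1) : ℕ) : ℤ) 1).mpr hdvd
        simpa using this
      have hpow : ‖t‖ ^ (i + 1 + 1) ≤ ‖t‖ ^ 2 :=
        pow_le_pow_of_le_one (norm_nonneg t) ht1 (by omega)
      calc ‖t‖ ^ (i + 1 + 1) * ‖((p.choose (i + 1 + 1) : ℕ) : ℚ_[p])‖
          ≤ ‖t‖ ^ 2 * (p : ℝ)⁻¹ :=
            mul_le_mul hpow hC (norm_nonneg _) (by positivity)
        _ = ‖t‖ * ‖t‖ * (p : ℝ)⁻¹ := by ring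
        _ ≤ ‖t‖ * (p : ℝ)⁻¹ * (p : ℝ)⁻¹ := by gcongr
        _ = ‖t‖ * ((p : ℝ)⁻¹ * (p : ℝ)⁻¹) := by ring
    · -- last term i + 2 = p
      have hC : ((p.choose (i + 1 + 1) : ℕ) : ℚ_[p]) = 1 := by
        have : i + 1 + 1 = p := by omega
        rw [this, Nat.choose_self, Nat.cast_one]
      rw [hC, norm_one, mul_one]
      have hpow : ‖t‖ ^ (i + 1 + 1) ≤ ‖t‖ ^ 3 :=
        pow_le_pow_of_le_one (norm_nonneg t) ht1 (by omega)
      calc ‖t‖ ^ (i + 1 + 1) ≤ ‖t‖ ^ 3 := hpow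
        _ = ‖t‖ * ‖t‖ * ‖t‖ := by ring
        _ ≤ ‖t‖ * (p : ℝ)⁻¹ * (p : ℝ)⁻¹ := by gcongr
        _ = ‖t‖ * ((p : ℝ)⁻¹ * (p : ℝ)⁻¹) := by ring
  have hL : ‖(p : ℚ_[p]) * t‖ = (p : ℝ)⁻¹ * ‖t‖ := by
    rw [norm_mul, Padic.norm_p]
  rw [hkey, norm_neg] at hL
  have : (p : ℝ)⁻¹ * ‖t‖ ≤ ‖t‖ * ((p : ℝ)⁻¹ * (p : ℝ)⁻¹) := hL ▸ hbound
  have hinv : (0 : ℝ) < (p : ℝ)⁻¹ := by positivity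
  have hppinv : (p : ℝ) * (p : ℝ)⁻¹ = 1 := mul_inv_cancel₀ (ne_of_gt hp0)
  nlinarith [this, htpos, hinv, hp0, mul_pos hinv htpos,
    (show (3 : ℝ) ≤ p by exact_mod_cast hp3)]

private lemma root_eq_one (hp3 : 3 ≤ p) :
    ∀ k : ℕ, 1 ≤ k → ∀ ζ : ℚ_[p], ζ ^ k = 1 → ‖ζ - 1‖ < 1 → ζ = 1 := by
  intro k
  induction k using Nat.strong_induction_on with
  | _ k ih =>
    intro hk ζ hζ hlt
    have hζn : ‖ζ‖ = 1 := norm_eq_one_of_pow (by omega) hζ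
    by_cases hdvd : p ∣ k
    · obtain ⟨m, rfl⟩ := hdvd
      have hm : 1 ≤ m := by
        rcases Nat.eq_zero_or_pos m with h | h
        · subst h; simp at hk
        · exact h
      have hη : (ζ ^ m) ^ p = 1 := by rw [← pow_mul, mul_comm]; exact hζ
      have h1 : ‖ζ ^ m - 1‖ < 1 := lt_of_le_of_lt (norm_pow_sub_one_le hζn m) hlt
      have hζm : ζ ^ m = 1 := pth_root_eq_one hp3 hη h1
      exact ih m (by nlinarith [hp.out.two_le]) hm ζ hζm hlt
    · by_contra hne
      have hgeom : (∑ i ∈ Finset.range k, ζ ^ i) * (ζ - 1) = 0 := by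
        rw [geom_sum_mul, hζ, sub_self]
      have hS0 : (∑ i ∈ Finset.range k, ζ ^ i) = 0 := by
        rcases mul_eq_zero.mp hgeom with h | h
        · exact h
        · exact absurd (sub_eq_zero.mp h) hne
      have hkn : ‖((k : ℕ) : ℚ_[p])‖ = 1 := by
        have hle : ‖((k : ℤ) : ℚ_[p])‖ ≤ 1 := Padic.norm_int_le_one _
        have hnlt : ¬ ‖((k : ℤ) : ℚ_[p])‖ < 1 := fun h =>
          hdvd (Int.natCast_dvd_natCast.mp (Padic.norm_intCast_lt_one_iff.mp h))
        have : ‖((k : ℤ) : ℚ_[p])‖ = 1 := le_antisymm hle (not_lt.mp hnlt)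
        simpa using this
      have hdiff : ‖(∑ i ∈ Finset.range k, ζ ^ i) - ((k : ℕ) : ℚ_[p])‖ < 1 := by
        have hid : (∑ i ∈ Finset.range k, ζ ^ i) - ((k : ℕ) : ℚ_[p])
            = ∑ i ∈ Finset.range k, (ζ ^ i - 1) := by
          rw [Finset.sum_sub_distrib]
          simp
        rw [hid]
        calc ‖∑ i ∈ Finset.range k, (ζ ^ i - 1)‖ ≤ ‖ζ - 1‖ :=
              IsUltrametricDist.norm_sum_le_of_forall_le_of_nonneg (norm_nonneg _)
                (fun i _ => norm_pow_sub_one_le hζn i)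
          _ < 1 := hlt
      have hSn : ‖∑ i ∈ Finset.range k, ζ ^ i‖ = 1 := by
        have hrw : (∑ i ∈ Finset.range k, ζ ^ i)
            = ((k : ℕ) : ℚ_[p]) + ((∑ i ∈ Finset.range k, ζ ^ i) - ((k : ℕ) : ℚ_[p])) := by ring
        rw [hrw, Padic.add_eq_max_of_ne (by rw [hkn]; exact (ne_of_lt hdiff).symm), hkn]
        exact max_eq_left hdiff.le
      rw [hS0, norm_zero] at hSn
      exact one_ne_zero hSn.symm

private lemma norm_sub_eq_one (hp3 : 3 ≤ p) {k : ℕ} (hk : 1 ≤ k) {ξ ξ' : ℚ_[p]}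
    (hξ : ξ ^ k = 1) (hξ' : ξ' ^ k = 1) (hne : ξ ≠ ξ') : ‖ξ - ξ'‖ = 1 := by
  have hξn : ‖ξ‖ = 1 := norm_eq_one_of_pow (by omega) hξ
  have hξ'n : ‖ξ'‖ = 1 := norm_eq_one_of_pow (by omega) hξ'
  have hξ'0 : ξ' ≠ 0 := by
    intro h; rw [h, norm_zero] at hξ'n; exact one_ne_zero hξ'n.symm
  set ζ := ξ / ξ' with hζ
  have hζk : ζ ^ k = 1 := by rw [hζ, div_pow, hξ, hξ', div_one]
  have hζne : ζ ≠ 1 := fun h => hne ((div_eq_one_iff_eq hξ'0).mp h)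
  have hζn : ‖ζ‖ = 1 := norm_eq_one_of_pow (by omega) hζk
  have hid : ξ - ξ' = (ζ - 1) * ξ' := by
    rw [hζ]; field_simp
  rw [hid, norm_mul, hξ'n, mul_one]
  refine le_antisymm ?_ ?_
  · calc ‖ζ - 1‖ = ‖ζ + (-1)‖ := by ring_nf
      _ ≤ max ‖ζ‖ ‖(-1 : ℚ_[p])‖ := Padic.nonarchimedean _ _
      _ ≤ 1 := by rw [hζn, norm_neg, norm_one]; simp
  · by_contra h
    exact hζne (root_eq_one hp3 k hk ζ hζk (not_le.mp h))

private lemma norm_two_eq_one (hp3 : 3 ≤ p) : ‖(2 : ℚ_[p])‖ = 1 := by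
  have hle : ‖((2 : ℤ) : ℚ_[p])‖ ≤ 1 := Padic.norm_int_le_one _
  have hnlt : ¬ ‖((2 : ℤ) : ℚ_[p])‖ < 1 := by
    intro h
    have := Padic.norm_intCast_lt_one_iff.mp h
    have := Int.le_of_dvd (by norm_num) this
    omega
  have : ‖((2 : ℤ) : ℚ_[p])‖ = 1 := le_antisymm hle (not_lt.mp hnlt)
  simpa using this

private lemma norm_six_ge (hp3 : 3 ≤ p) : (p : ℝ)⁻¹ ≤ ‖(6 : ℚ_[p])‖ := by
  by_contra h
  push_neg at h
  have h6 : (6 : ℚ_[p]) ≠ 0 := by norm_num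
  have hpn : ‖(6 : ℚ_[p])‖ < ‖(p : ℚ_[p])‖ := by rw [Padic.norm_p]; exact h
  have := padic_p_mul_le h6 hpn
  rw [Padic.norm_p] at this
  have hp0 : (0 : ℝ) < p := by exact_mod_cast hp.out.pos
  have h2 : ‖((6 : ℤ) : ℚ_[p])‖ ≤ (p : ℝ) ^ (-(2 : ℕ) : ℤ) := by
    have hc6 : ((6 : ℤ) : ℚ_[p]) = (6 : ℚ_[p]) := by norm_num
    rw [hc6]
    have hpow : (p : ℝ) ^ (-(2 : ℕ) : ℤ) = (p : ℝ)⁻¹ * (p : ℝ)⁻¹ := by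
      rw [zpow_neg, zpow_natCast]; rw [sq]; rw [mul_inv]
    rw [hpow]
    calc ‖(6 : ℚ_[p])‖ = (p : ℝ)⁻¹ * ((p : ℝ) * ‖(6 : ℚ_[p])‖) := by
          field_simp
      _ ≤ (p : ℝ)⁻¹ * (p : ℝ)⁻¹ := by
          apply mul_le_mul_of_nonneg_left this (by positivity)
  have hdvd : ((p : ℤ) ^ 2) ∣ (6 : ℤ) := (Padic.norm_int_le_pow_iff_dvd 6 2).mp h2
  have := Int.le_of_dvd (by norm_num) hdvd
  nlinarith [(show (3 : ℤ) ≤ p by exact_mod_cast hp3)]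

end Aux

private lemma case_one {p : ℕ} [hp : Fact p.Prime] (hp3 : 3 ≤ p) (q k : ℕ)
    (hq : 1 ≤ q) (hk : 1 ≤ k)
    (θ : ℚ_[p]) (hθq : ‖θ - 1‖ < ‖(q : ℚ_[p])‖) (hqk : ‖(q : ℚ_[p])‖ < ‖(k : ℚ_[p])‖)
    (ξ' : ℚ_[p]) (hξ' : ξ' ^ k = 1) (hξ'1 : ξ' ≠ 1) :
    ‖xiCenter p q k θ 1 - xiCenter p q k θ ξ'‖ ≥ ‖(q : ℚ_[p]) * (θ - 1)‖ := by
  have hp0 : (0 : ℝ) < p := by exact_mod_cast hp.out.pos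
  have hq0 : 0 < ‖(q : ℚ_[p])‖ := (norm_nonneg (θ - 1)).trans_lt hθq
  have hk0 : 0 < ‖(k : ℚ_[p])‖ := hq0.trans hqk
  have qne : (q : ℚ_[p]) ≠ 0 := by
    intro h; rw [h, norm_zero] at hq0; exact lt_irrefl 0 hq0
  have kne : (k : ℚ_[p]) ≠ 0 := by
    intro h; rw [h, norm_zero] at hk0; exact lt_irrefl 0 hk0
  have hu : ‖(1 : ℚ_[p]) - ξ'‖ = 1 :=
    norm_sub_eq_one hp3 hk (one_pow k) hξ' (fun h => hξ'1 h.symm)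
  have une : (1 : ℚ_[p]) - ξ' ≠ 0 := by
    intro h; rw [h, norm_zero] at hu; exact one_ne_zero hu.symm
  have two_ne : (2 : ℚ_[p]) ≠ 0 := two_ne_zero
  have six_ne : (6 : ℚ_[p]) ≠ 0 := by norm_num
  set w : ℚ_[p] := -(((k : ℚ_[p]) - 1) * (q : ℚ_[p]) / 2)
      + ((k : ℚ_[p]) - 1) * ((k : ℚ_[p]) - 2) * (q : ℚ_[p]) ^ 2 / (6 * (k : ℚ_[p]))
      - (q : ℚ_[p]) / (1 - ξ') with hw_def
  have hid : xiCenter p q k θ 1 - xiCenter p q k θ ξ'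
      = (θ - 1) * ((k : ℚ_[p]) + w) := by
    simp only [xiCenter, if_pos rfl, if_neg hξ'1, hw_def, ↓reduceIte]
    field_simp
    ring
  -- norm bounds
  have h2 : ‖(2 : ℚ_[p])‖ = 1 := norm_two_eq_one hp3
  have h6 : (p : ℝ)⁻¹ ≤ ‖(6 : ℚ_[p])‖ := norm_six_ge hp3
  have hk1 : ‖(k : ℚ_[p]) - 1‖ ≤ 1 := by
    have : ((k : ℤ) - 1 : ℤ) = ((k : ℤ) - 1) := rfl
    have h := Padic.norm_int_le_one (p := p) ((k : ℤ) - 1)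
    have hcast : (((k : ℤ) - 1 : ℤ) : ℚ_[p]) = (k : ℚ_[p]) - 1 := by push_cast; ring
    rwa [hcast] at h
  have hk2 : ‖(k : ℚ_[p]) - 2‖ ≤ 1 := by
    have h := Padic.norm_int_le_one (p := p) ((k : ℤ) - 2)
    have hcast : (((k : ℤ) - 2 : ℤ) : ℚ_[p]) = (k : ℚ_[p]) - 2 := by push_cast; ring
    rwa [hcast] at h
  have hpq : (p : ℝ) * ‖(q : ℚ_[p])‖ ≤ ‖(k : ℚ_[p])‖ := padic_p_mul_le qne hqk
  have ht1 : ‖((k : ℚ_[p]) - 1) * (q : ℚ_[p]) / 2‖ < ‖(k : ℚ_[p])‖ := by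
    rw [norm_div, norm_mul, h2, div_one]
    calc ‖(k : ℚ_[p]) - 1‖ * ‖(q : ℚ_[p])‖ ≤ ‖(q : ℚ_[p])‖ :=
          mul_le_of_le_one_left (norm_nonneg _) hk1
      _ < ‖(k : ℚ_[p])‖ := hqk
  have ht2 : ‖((k : ℚ_[p]) - 1) * ((k : ℚ_[p]) - 2) * (q : ℚ_[p]) ^ 2 / (6 * (k : ℚ_[p]))‖
      < ‖(k : ℚ_[p])‖ := by
    rw [norm_div, norm_mul, norm_mul, norm_pow, norm_mul]
    have h6pos : 0 < ‖(6 : ℚ_[p])‖ := by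
      rw [norm_pos_iff]; exact six_ne
    rw [div_lt_iff₀ (mul_pos h6pos hk0)]
    have hle : ‖(k : ℚ_[p]) - 1‖ * ‖(k : ℚ_[p]) - 2‖ * ‖(q : ℚ_[p])‖ ^ 2
        ≤ ‖(q : ℚ_[p])‖ ^ 2 := by
      calc ‖(k : ℚ_[p]) - 1‖ * ‖(k : ℚ_[p]) - 2‖ * ‖(q : ℚ_[p])‖ ^ 2
          ≤ 1 * 1 * ‖(q : ℚ_[p])‖ ^ 2 := by gcongr
        _ = ‖(q : ℚ_[p])‖ ^ 2 := by ring
    have hkey : ‖(q : ℚ_[p])‖ ^ 2 < ‖(k : ℚ_[p])‖ * (‖(6 : ℚ_[p])‖ * ‖(k : ℚ_[p])‖) := by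
      have h1 : ‖(q : ℚ_[p])‖ ≤ (p : ℝ)⁻¹ * ‖(k : ℚ_[p])‖ := by
        rw [inv_mul_eq_div, le_div_iff₀ hp0]; linarith [mul_comm ‖(q : ℚ_[p])‖ (p : ℝ)]
      have h2' : ‖(6 : ℚ_[p])‖ * ‖(k : ℚ_[p])‖ ≥ (p : ℝ)⁻¹ * ‖(k : ℚ_[p])‖ :=
        mul_le_mul_of_nonneg_right h6 hk0.le
      nlinarith [hq0, hk0, hqk, h1, h2']
    linarith
  have ht3 : ‖(q : ℚ_[p]) / (1 - ξ')‖ < ‖(k : ℚ_[p])‖ := by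
    rw [norm_div, hu, div_one]; exact hqk
  have hw : ‖w‖ < ‖(k : ℚ_[p])‖ := by
    rw [hw_def]
    calc ‖-(((k : ℚ_[p]) - 1) * (q : ℚ_[p]) / 2)
          + ((k : ℚ_[p]) - 1) * ((k : ℚ_[p]) - 2) * (q : ℚ_[p]) ^ 2 / (6 * (k : ℚ_[p]))
          - (q : ℚ_[p]) / (1 - ξ')‖
        = ‖(-(((k : ℚ_[p]) - 1) * (q : ℚ_[p]) / 2)
          + ((k : ℚ_[p]) - 1) * ((k : ℚ_[p]) - 2) * (q : ℚ_[p]) ^ 2 / (6 * (k : ℚ_[p])))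
          + (-((q : ℚ_[p]) / (1 - ξ')))‖ := by ring_nf
      _ ≤ max ‖-(((k : ℚ_[p]) - 1) * (q : ℚ_[p]) / 2)
          + ((k : ℚ_[p]) - 1) * ((k : ℚ_[p]) - 2) * (q : ℚ_[p]) ^ 2 / (6 * (k : ℚ_[p]))‖
          ‖-((q : ℚ_[p]) / (1 - ξ'))‖ := Padic.nonarchimedean _ _
      _ < ‖(k : ℚ_[p])‖ := by
          rw [max_lt_iff]
          constructor
          · calc ‖-(((k : ℚ_[p]) - 1) * (q : ℚ_[p]) / 2)
                + ((k : ℚ_[p]) - 1) * ((k : ℚ_[p]) - 2) * (q : ℚ_[p]) ^ 2 / (6 * (k : ℚ_[p]))‖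
                ≤ max ‖-(((k : ℚ_[p]) - 1) * (q : ℚ_[p]) / 2)‖
                  ‖((k : ℚ_[p]) - 1) * ((k : ℚ_[p]) - 2) * (q : ℚ_[p]) ^ 2 / (6 * (k : ℚ_[p]))‖ :=
                  Padic.nonarchimedean _ _
              _ < ‖(k : ℚ_[p])‖ := by
                  rw [max_lt_iff, norm_neg]
                  exact ⟨ht1, ht2⟩
          · rw [norm_neg]; exact ht3
  have hB : ‖(k : ℚ_[p]) + w‖ = ‖(k : ℚ_[p])‖ := by
    rw [Padic.add_eq_max_of_ne (ne_of_gt hw)]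
    exact max_eq_left hw.le
  rw [hid, norm_mul, hB, norm_mul]
  nlinarith [norm_nonneg (θ - 1), hqk, hq0]

theorem stmt7 (p : ℕ) [Fact p.Prime] (hp : 3 ≤ p) (q k : ℕ) (hq : 1 ≤ q) (hk : 1 ≤ k)
    (θ : ℚ_[p]) (hθq : ‖θ - 1‖ < ‖(q : ℚ_[p])‖) (hqk : ‖(q : ℚ_[p])‖ < ‖(k : ℚ_[p])‖)
    (ξ ξ' : ℚ_[p]) (hξ : ξ ^ k = 1) (hξ' : ξ' ^ k = 1) (hne : ξ ≠ ξ') :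
    ‖xiCenter p q k θ ξ - xiCenter p q k θ ξ'‖ ≥ ‖(q : ℚ_[p]) * (θ - 1)‖ ∧
    Disjoint {x : ℚ_[p] | ‖x - xiCenter p q k θ ξ‖ < ‖(q : ℚ_[p]) * (θ - 1)‖}
      {x : ℚ_[p] | ‖x - xiCenter p q k θ ξ'‖ < ‖(q : ℚ_[p]) * (θ - 1)‖} := by
  have key : ‖xiCenter p q k θ ξ - xiCenter p q k θ ξ'‖ ≥ ‖(q : ℚ_[p]) * (θ - 1)‖ := by
    by_cases h1 : ξ = 1
    · subst h1
      exact case_one hp q k hq hk θ hθq hqk ξ' hξ' (fun h => hne (h ▸ rfl))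
    · by_cases h2 : ξ' = 1
      · subst h2
        rw [norm_sub_rev]
        exact case_one hp q k hq hk θ hθq hqk ξ hξ h1
      · have hu : ‖(1 : ℚ_[p]) - ξ‖ = 1 :=
          norm_sub_eq_one hp hk (one_pow k) hξ (fun h => h1 h.symm)
        have hu' : ‖(1 : ℚ_[p]) - ξ'‖ = 1 :=
          norm_sub_eq_one hp hk (one_pow k) hξ' (fun h => h2 h.symm)
        have hd : ‖ξ - ξ'‖ = 1 := norm_sub_eq_one hp hk hξ hξ' hne
        have une : (1 : ℚ_[p]) - ξ ≠ 0 := by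
          intro h; rw [h, norm_zero] at hu; exact one_ne_zero hu.symm
        have u'ne : (1 : ℚ_[p]) - ξ' ≠ 0 := by
          intro h; rw [h, norm_zero] at hu'; exact one_ne_zero hu'.symm
        have hid : xiCenter p q k θ ξ - xiCenter p q k θ ξ'
            = (q : ℚ_[p]) * (θ - 1) * ((ξ - ξ') / ((1 - ξ) * (1 - ξ'))) := by
          simp only [xiCenter, if_neg h1, if_neg h2]
          field_simp
          ring
        rw [hid, norm_mul, norm_mul, norm_div, norm_mul, hu, hu', hd]
        simp
  refine ⟨key, ?_⟩
  rw [Set.disjoint_left]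
  intro x hx hx'
  simp only [Set.mem_setOf_eq] at hx hx'
  have hlt : ‖xiCenter p q k θ ξ - xiCenter p q k θ ξ'‖ < ‖(q : ℚ_[p]) * (θ - 1)‖ := by
    have hde : xiCenter p q k θ ξ - xiCenter p q k θ ξ'
        = (-(x - xiCenter p q k θ ξ)) + (x - xiCenter p q k θ ξ') := by ring
    calc ‖xiCenter p q k θ ξ - xiCenter p q k θ ξ'‖
        ≤ max ‖-(x - xiCenter p q k θ ξ)‖ ‖x - xiCenter p q k θ ξ'‖ := by
          rw [hde]; exact Padic.nonarchimedean _ _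
      _ < ‖(q : ℚ_[p]) * (θ - 1)‖ := by
          rw [max_lt_iff, norm_neg]; exact ⟨hx, hx'⟩
  exact absurd hlt (not_lt.mpr key)
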